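/- Let H be a complex Hilbert space and let U_1, …, U_n be bounded normal operators on H that pairwise commute and satisfy ∑_{j=1}^n U_j U_j* = I (i.e., they form a spherical unitary). If A is a bounded operator on H satisfying ∑_{j=1}^n U_j A U_j* = A, then A commutes with U_j and with U_j* for every 1 ≤ j ≤ n (equivalently, A lies in the commutant of the C*-algebra generated by U_1, …, U_n). -/

import Mathlib

set_option linter.unusedSectionVars false
set_option linter.unreachableTactic false
set_option linter.unusedTactic false

open NormedSpace

section Fuglede

variable {H : Type*} [NormedAddCommGroup H] [InnerProductSpace ℂ H] [CompleteSpace H]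

private lemma unitary_norm_le {u : H →L[ℂ] H} (hu : star u * u = 1) : ‖u‖ ≤ 1 := by
  have h1 : ‖star u * u‖ = ‖u‖ * ‖u‖ := CStarRing.norm_star_mul_self
  rw [hu] at h1
  have h2 : ‖(1 : H →L[ℂ] H)‖ ≤ 1 := by
    rw [ContinuousLinearMap.one_def]; exact ContinuousLinearMap.norm_id_le
  nlinarith [norm_nonneg u]

private lemma skew_exp_norm_le (a : H →L[ℂ] H) (ha : star a = -a) : ‖exp a‖ ≤ 1 := by
  let +nondep : NormedAlgebra ℚ (H →L[ℂ] H) := .restrictScalars ℚ ℂ _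
  apply unitary_norm_le
  have := exp_mem_unitary_of_mem_skewAdjoint (x := a) (skewAdjoint.mem_iff.mpr ha)
  exact (Unitary.mem_iff.mp this).1

private lemma fuglede (N T : H →L[ℂ] H) (hN : N * star N = star N * N)
    (hT : T * N = N * T) : T * star N = star N * T := by
  let +nondep : NormedAlgebra ℚ (H →L[ℂ] H) := .restrictScalars ℚ ℂ _
  set c := star N with hc
  set f : ℂ → (H →L[ℂ] H) := fun z => exp (z • c) * T * exp (z • (-c)) with hf
  have hcommNc : N * c = c * N := hN
  have hTexp : ∀ w : ℂ, T * exp (w • N) = exp (w • N) * T := by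
    intro w
    have h1 : Commute T (w • N) := by
      show T * (w • N) = (w • N) * T
      rw [mul_smul_comm, smul_mul_assoc, hT]
    exact (h1.exp_right).eq
  -- boundedness of f
  have hbound : ∀ z : ℂ, ‖f z‖ ≤ ‖T‖ := by
    intro z
    set a : H →L[ℂ] H := z • c with ha
    set b : H →L[ℂ] H := (starRingEnd ℂ z) • N with hb
    have hab : Commute a b := by
      show a * b = b * a
      rw [ha, hb, mul_smul_comm, smul_mul_assoc, mul_smul_comm, smul_mul_assoc, ← hcommNc,
        smul_comm]
    have hstara : star a = b := by
      rw [ha, hb, star_smul, RCLike.star_def, hc, star_star]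
    have hskew : star (a - b) = -(a - b) := by
      have hstarb : star b = a := by
        rw [hb, ha, star_smul, RCLike.star_def, hc, starRingEnd_self_apply]
      rw [star_sub, hstara, hstarb]; abel
    -- factor f z = exp (a-b) * T * exp (b-a)
    have hfact : f z = exp (a - b) * T * exp (b - a) := by
      have e1 : exp a = exp (a - b) * exp b := by
        rw [← exp_add_of_commute ((hab.sub_left (Commute.refl b)))]
        congr 1; abel
      have e2 : exp (z • (-c)) = exp (b - a) * exp (-b) := by
        have : z • (-c) = -a := by rw [ha, smul_neg]
        rw [this, ← exp_add_of_commute (((Commute.refl b).sub_left hab).neg_right)]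
        congr 1; abel
      have hTb : T * exp b = exp b * T := hTexp _
      have hbb : exp b * exp (b - a) = exp (b - a) * exp b :=
        ((Commute.refl b).sub_right hab.symm).exp |>.eq
      have hbnb : exp b * exp (-b) = 1 := by
        rw [← exp_add_of_commute (Commute.refl b).neg_right, add_neg_cancel, exp_zero]
      calc f z = exp a * T * exp (z • (-c)) := rfl
        _ = (exp (a - b) * exp b) * T * (exp (b - a) * exp (-b)) := by rw [e1, e2]
        _ = exp (a - b) * (exp b * T) * (exp (b - a) * exp (-b)) := by
              rw [mul_assoc (exp (a - b)) (exp b) T]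
        _ = exp (a - b) * (T * exp b) * (exp (b - a) * exp (-b)) := by rw [hTb]
        _ = exp (a - b) * T * (exp b * (exp (b - a) * exp (-b))) := by
              simp only [mul_assoc]
        _ = exp (a - b) * T * ((exp b * exp (b - a)) * exp (-b)) := by
              rw [mul_assoc (exp b) (exp (b - a)) (exp (-b))]
        _ = exp (a - b) * T * (exp (b - a) * (exp b * exp (-b))) := by
              rw [hbb, mul_assoc (exp (b - a)) (exp b) (exp (-b))]
        _ = exp (a - b) * T * exp (b - a) := by rw [hbnb, mul_one]
    have h1 : ‖exp (a - b)‖ ≤ 1 := skew_exp_norm_le _ hskew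
    have h2 : ‖exp (b - a)‖ ≤ 1 := by
      apply skew_exp_norm_le
      rw [star_sub, hstara]
      have hstarb : star b = a := by
        rw [hb, ha, star_smul, RCLike.star_def, hc, starRingEnd_self_apply]
      rw [hstarb]; abel
    calc ‖f z‖ = ‖exp (a - b) * T * exp (b - a)‖ := by rw [hfact]
      _ ≤ ‖exp (a - b) * T‖ * ‖exp (b - a)‖ := norm_mul_le _ _
      _ ≤ ‖exp (a - b)‖ * ‖T‖ * ‖exp (b - a)‖ := by
          gcongr; exact norm_mul_le _ _
      _ ≤ 1 * ‖T‖ * 1 := by gcongr <;> first | exact h1 | exact h2 | positivity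
      _ = ‖T‖ := by ring
  -- differentiability
  have hdiff : Differentiable ℂ f := by
    have d1 : Differentiable ℂ (fun z : ℂ => exp (z • c)) := fun z =>
      (hasDerivAt_exp_smul_const c z).differentiableAt
    have d2 : Differentiable ℂ (fun z : ℂ => exp (z • (-c))) := fun z =>
      (hasDerivAt_exp_smul_const (-c) z).differentiableAt
    exact (d1.mul (differentiable_const T)).mul d2
  -- Liouville
  have hconst : ∀ z : ℂ, f z = f 0 := by
    intro z
    apply hdiff.apply_eq_apply_of_bounded
    apply isBounded_iff_forall_norm_le.2
    exact ⟨‖T‖, by rintro _ ⟨z, rfl⟩; exact hbound z⟩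
  have hf0 : f 0 = T := by
    simp [hf, exp_zero]
  -- exp (z•c) commutes with T
  have hsemi : ∀ z : ℂ, exp (z • c) * T = T * exp (z • c) := by
    intro z
    have h : exp (z • c) * T * exp (z • (-c)) = T := (hconst z).trans hf0
    have hinv : exp (z • (-c)) * exp (z • c) = 1 := by
      have hn : z • (-c) = -(z • c) := smul_neg z c
      rw [hn, ← exp_add_of_commute (Commute.refl (z • c)).neg_left, neg_add_cancel, exp_zero]
    calc exp (z • c) * T = exp (z • c) * T * (exp (z • (-c)) * exp (z • c)) := by
          rw [hinv, mul_one]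
      _ = (exp (z • c) * T * exp (z • (-c))) * exp (z • c) := by
          rw [mul_assoc (exp (z • c) * T) (exp (z • (-c))) (exp (z • c))]
      _ = T * exp (z • c) := by rw [h]
  -- differentiate at 0
  have hd1 : HasDerivAt (fun z : ℂ => exp (z • c) * T) (exp ((0:ℂ) • c) * c * T) 0 :=
    (hasDerivAt_exp_smul_const c 0).mul_const T
  have hd2 : HasDerivAt (fun z : ℂ => exp (z • c) * T) (T * (exp ((0:ℂ) • c) * c)) 0 := by
    have : (fun z : ℂ => exp (z • c) * T) = fun z : ℂ => T * exp (z • c) :=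
      funext fun z => hsemi z
    rw [this]
    exact (hasDerivAt_exp_smul_const c 0).const_mul T
  have := hd1.unique hd2
  simp only [zero_smul, exp_zero, one_mul, mul_one] at this
  exact this.symm

end Fuglede

section Aux

variable {H : Type*} [NormedAddCommGroup H] [InnerProductSpace ℂ H] [CompleteSpace H]

private noncomputable def PhiMap {n : ℕ} (U : Fin n → H →L[ℂ] H) :
    (H →L[ℂ] H) → (H →L[ℂ] H) := fun X => ∑ j, U j * X * star (U j)

private noncomputable def pq (X : H →L[ℂ] H) (x : H) : ℝ := RCLike.re (inner ℂ x (X x) : ℂ)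

private lemma pq_term (Y : H →L[ℂ] H) (x : H) : pq (star Y * Y) x = ‖Y x‖ ^ 2 := by
  unfold pq
  rw [ContinuousLinearMap.mul_apply, ContinuousLinearMap.star_eq_adjoint,
    ContinuousLinearMap.adjoint_inner_right]
  exact inner_self_eq_norm_sq _

private lemma pq_add (X Y : H →L[ℂ] H) (x : H) : pq (X + Y) x = pq X x + pq Y x := by
  unfold pq
  rw [ContinuousLinearMap.add_apply, inner_add_right, map_add]

private lemma pq_finsum {n : ℕ} (C : Fin n → H →L[ℂ] H) (x : H) :
    pq (∑ i, C i) x = ∑ i, pq (C i) x := by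
  unfold pq
  rw [ContinuousLinearMap.sum_apply, inner_sum, map_sum]

private lemma pq_sumsq {n : ℕ} (c : Fin n → H →L[ℂ] H) (x : H) :
    pq (∑ i, star (c i) * c i) x = ∑ i, ‖c i x‖ ^ 2 := by
  rw [pq_finsum]
  exact Finset.sum_congr rfl fun i _ => pq_term (c i) x

private lemma pq_Phi {n : ℕ} (U : Fin n → H →L[ℂ] H) (X : H →L[ℂ] H) (x : H) :
    pq (PhiMap U X) x = ∑ j, pq X (star (U j) x) := by
  unfold PhiMap pq
  rw [ContinuousLinearMap.sum_apply, inner_sum, map_sum]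
  refine Finset.sum_congr rfl fun j _ => ?_
  congr 1
  simp only [ContinuousLinearMap.mul_apply, ContinuousLinearMap.star_eq_adjoint]
  exact (ContinuousLinearMap.adjoint_inner_left (U j) _ x).symm

private lemma norm_sum_sq {n : ℕ} (U : Fin n → H →L[ℂ] H)
    (hsum : ∑ j, U j * star (U j) = 1) (x : H) :
    ∑ j, ‖star (U j) x‖ ^ 2 = ‖x‖ ^ 2 := by
  have h1 : ∀ j, ‖star (U j) x‖ ^ 2 = pq (star (star (U j)) * star (U j)) x := fun j =>
    (pq_term (star (U j)) x).symm
  rw [Finset.sum_congr rfl fun j _ => h1 j, ← pq_finsum]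
  simp only [star_star]
  rw [hsum]
  unfold pq
  rw [ContinuousLinearMap.one_apply]
  exact inner_self_eq_norm_sq _

private lemma gap_identity {n : ℕ} (U : Fin n → H →L[ℂ] H)
    (hsum : ∑ j, U j * star (U j) = 1) (X : H →L[ℂ] H)
    (h1 : ∑ j, U j * X * star (U j) = X)
    (h2 : ∑ j, U j * star X * star (U j) = star X) :
    PhiMap U (star X * X) = star X * X +
      ∑ i, star (star (U i) * X - X * star (U i)) * (star (U i) * X - X * star (U i)) := by
  have expand : ∀ i : Fin n,
      star (star (U i) * X - X * star (U i)) * (star (U i) * X - X * star (U i))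
      = (star X * (U i * star (U i))) * X - star X * (U i * X * star (U i))
        - (U i * star X * star (U i)) * X + U i * (star X * X) * star (U i) := by
    intro i
    simp only [star_sub, star_mul, star_star]
    noncomm_ring
  have hs : ∑ i, star (star (U i) * X - X * star (U i)) * (star (U i) * X - X * star (U i))
      = PhiMap U (star X * X) - star X * X := by
    rw [Finset.sum_congr rfl fun i _ => expand i]
    rw [Finset.sum_add_distrib, Finset.sum_sub_distrib, Finset.sum_sub_distrib]
    rw [← Finset.sum_mul, ← Finset.mul_sum, hsum, mul_one, ← Finset.mul_sum, h1,
      ← Finset.sum_mul, h2]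
    unfold PhiMap
    abel
  rw [hs]; abel

private lemma fixed_commutator {n : ℕ} (U : Fin n → H →L[ℂ] H)
    (hfug : ∀ i j, U i * star (U j) = star (U j) * U i)
    (hstarcomm : ∀ i j, star (U i) * star (U j) = star (U j) * star (U i))
    (X : H →L[ℂ] H) (h1 : ∑ j, U j * X * star (U j) = X) (i : Fin n) :
    ∑ j, U j * (star (U i) * X - X * star (U i)) * star (U j)
      = star (U i) * X - X * star (U i) := by
  have key : ∀ j, U j * (star (U i) * X - X * star (U i)) * star (U j)
      = star (U i) * (U j * X * star (U j)) - (U j * X * star (U j)) * star (U i) := by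
    intro j
    rw [mul_sub, sub_mul]
    congr 1
    · rw [← mul_assoc, hfug j i]
      simp only [mul_assoc]
    · rw [← mul_assoc, mul_assoc (U j * X), hstarcomm i j, ← mul_assoc]
  rw [Finset.sum_congr rfl fun j _ => key j, Finset.sum_sub_distrib, ← Finset.mul_sum,
    ← Finset.sum_mul, h1]

end Aux

section Main

variable {H : Type*} [NormedAddCommGroup H] [InnerProductSpace ℂ H] [CompleteSpace H]

private lemma aux_main {n : ℕ} (U : Fin n → H →L[ℂ] H)
    (hfug : ∀ i j, U i * star (U j) = star (U j) * U i)
    (hstarcomm : ∀ i j, star (U i) * star (U j) = star (U j) * star (U i))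
    (hsum : ∑ j, U j * star (U j) = 1)
    (A : H →L[ℂ] H)
    (hA : ∑ j, U j * A * star (U j) = A) :
    ∀ i, A * star (U i) = star (U i) * A := by
  intro i
  have hPhiStar : ∀ X : H →L[ℂ] H,
      ∑ j, U j * star X * star (U j) = star (∑ j, U j * X * star (U j)) := by
    intro X
    rw [star_sum]
    exact Finset.sum_congr rfl fun j _ => by simp only [star_mul, star_star, mul_assoc]
  have hAstar : ∑ j, U j * star A * star (U j) = star A := by rw [hPhiStar, hA]
  -- the commutator E
  set E : H →L[ℂ] H := star (U i) * A - A * star (U i) with hE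
  have hEfix : ∑ j, U j * E * star (U j) = E := fixed_commutator U hfug hstarcomm A hA i
  have hEstar : ∑ j, U j * star E * star (U j) = star E := by rw [hPhiStar, hEfix]
  -- gap identities
  have hgapA : PhiMap U (star A * A) = star A * A +
      ∑ i', star (star (U i') * A - A * star (U i')) * (star (U i') * A - A * star (U i')) :=
    gap_identity U hsum A hA hAstar
  have hgapE : PhiMap U (star E * E) = star E * E +
      ∑ i', star (star (U i') * E - E * star (U i')) * (star (U i') * E - E * star (U i')) :=
    gap_identity U hsum E hEfix hEstar
  -- pointwise consequences
  have hA_ge : ∀ x : H, pq (star A * A) x + ‖E x‖ ^ 2 ≤ pq (PhiMap U (star A * A)) x := by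
    intro x
    rw [hgapA, pq_add, pq_sumsq]
    have hmem : i ∈ (Finset.univ : Finset (Fin n)) := Finset.mem_univ i
    have h5 : ‖(star (U i) * A - A * star (U i)) x‖ ^ 2
        ≤ ∑ i', ‖(star (U i') * A - A * star (U i')) x‖ ^ 2 :=
      Finset.single_le_sum
        (f := fun i' => ‖(star (U i') * A - A * star (U i')) x‖ ^ 2)
        (fun i' _ => sq_nonneg _) hmem
    rw [hE]
    linarith
  have hE_ge : ∀ x : H, ‖E x‖ ^ 2 ≤ pq (PhiMap U (star E * E)) x := by
    intro x
    rw [hgapE, pq_add, pq_sumsq, ← pq_term E x]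
    have : (0:ℝ) ≤ ∑ i', ‖(star (U i') * E - E * star (U i')) x‖ ^ 2 :=
      Finset.sum_nonneg fun i' _ => sq_nonneg _
    linarith [pq_term E x]
  -- upper bound
  have hub : ∀ (k : ℕ) (x : H), pq ((PhiMap U)^[k] (star A * A)) x ≤ ‖A‖ ^ 2 * ‖x‖ ^ 2 := by
    intro k
    induction k with
    | zero =>
      intro x
      simp only [Function.iterate_zero, id_eq]
      rw [pq_term]
      have h := A.le_opNorm x
      nlinarith [norm_nonneg (A x), norm_nonneg A, norm_nonneg x]
    | succ k ih =>
      intro x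
      rw [Function.iterate_succ_apply', pq_Phi]
      calc ∑ j, pq ((PhiMap U)^[k] (star A * A)) (star (U j) x)
          ≤ ∑ j, ‖A‖ ^ 2 * ‖star (U j) x‖ ^ 2 := Finset.sum_le_sum fun j _ => ih _
        _ = ‖A‖ ^ 2 * ∑ j, ‖star (U j) x‖ ^ 2 := by rw [Finset.mul_sum]
        _ = ‖A‖ ^ 2 * ‖x‖ ^ 2 := by rw [norm_sum_sq U hsum x]
  -- lower bound
  have hlb : ∀ (k : ℕ) (x : H),
      pq (star A * A) x + k * ‖E x‖ ^ 2 ≤ pq ((PhiMap U)^[k] (star A * A)) x := by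
    intro k
    induction k with
    | zero => intro x; simp
    | succ k ih =>
      intro x
      rw [Function.iterate_succ_apply', pq_Phi]
      have step1 : ∑ j, (pq (star A * A) (star (U j) x) + k * ‖E (star (U j) x)‖ ^ 2)
          ≤ ∑ j, pq ((PhiMap U)^[k] (star A * A)) (star (U j) x) :=
        Finset.sum_le_sum fun j _ => ih _
      have e1 : ∑ j, (pq (star A * A) (star (U j) x) + k * ‖E (star (U j) x)‖ ^ 2)
          = pq (PhiMap U (star A * A)) x + k * pq (PhiMap U (star E * E)) x := by
        rw [Finset.sum_add_distrib, ← Finset.mul_sum, pq_Phi, pq_Phi]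
        congr 2
        exact Finset.sum_congr rfl fun j _ => (pq_term E _).symm
      have h2 := hA_ge x
      have h3 := hE_ge x
      have h4 : (0:ℝ) ≤ k := Nat.cast_nonneg k
      push_cast
      nlinarith [step1, e1]
  -- conclude E = 0
  have hEzero : E = 0 := by
    ext x
    have hnn : (0:ℝ) ≤ pq (star A * A) x := by rw [pq_term]; positivity
    have key : ∀ k : ℕ, (k : ℝ) * ‖E x‖ ^ 2 ≤ ‖A‖ ^ 2 * ‖x‖ ^ 2 := by
      intro k
      have := hlb k x
      have := hub k x
      linarith
    have hsq : ‖E x‖ ^ 2 ≤ 0 := by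
      by_contra h
      push_neg at h
      obtain ⟨k, hk⟩ := exists_nat_gt ((‖A‖ ^ 2 * ‖x‖ ^ 2) / ‖E x‖ ^ 2)
      rw [div_lt_iff₀ h] at hk
      linarith [key k]
    have : ‖E x‖ = 0 := by nlinarith [norm_nonneg (E x)]
    simpa using norm_eq_zero.mp this
  have : star (U i) * A - A * star (U i) = 0 := by rw [← hE]; exact hEzero
  exact (sub_eq_zero.mp this).symm

end Main


open ContinuousLinearMap in
/-- **Davie–Jewell lemma.**  If `U₁, …, Uₙ` is a spherical unitary (pairwise commuting
normal operators with `∑ Uⱼ Uⱼ* = 1`) on a complex Hilbert space `H`, and `A` is a bounded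
operator with `∑ Uⱼ A Uⱼ* = A`, then `A` commutes with every `Uⱼ` and every `Uⱼ*`. -/
theorem spherical_unitary_commutant
    {H : Type*} [NormedAddCommGroup H] [InnerProductSpace ℂ H] [CompleteSpace H]
    {n : ℕ} (U : Fin n → H →L[ℂ] H)
    (hcomm : ∀ i j, U i * U j = U j * U i)
    (hnormal : ∀ i, U i * star (U i) = star (U i) * U i)
    (hsum : ∑ j, U j * star (U j) = 1)
    (A : H →L[ℂ] H)
    (hA : ∑ j, U j * A * star (U j) = A) :
    ∀ j, A * U j = U j * A ∧ A * star (U j) = star (U j) * A := by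
  have hfug : ∀ i j, U i * star (U j) = star (U j) * U i := fun i j =>
    fuglede (U j) (U i) (hnormal j) (hcomm i j)
  have hstarcomm : ∀ i j, star (U i) * star (U j) = star (U j) * star (U i) := by
    intro i j; rw [← star_mul, ← star_mul, hcomm]
  have hA' : ∑ j, U j * star A * star (U j) = star A := by
    have h1 : ∑ j, U j * star A * star (U j) = star (∑ j, U j * A * star (U j)) := by
      rw [star_sum]
      exact Finset.sum_congr rfl fun j _ => by simp only [star_mul, star_star, mul_assoc]
    rw [h1, hA]
  intro j
  refine ⟨?_, aux_main U hfug hstarcomm hsum A hA j⟩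
  have h := aux_main U hfug hstarcomm hsum (star A) hA' j
  have h2 := congrArg star h
  simp only [star_mul, star_star] at h2
  exact h2.symm
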